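/- Let L be a finite-dimensional simple Lie algebra with a decomposition L = L_a ⊕ L_b into subspaces satisfying [L_a,L_a] ⊆ L_b, [L_a,L_b] ⊆ L_b, and [L_b,L_b] ⊆ L_a. Then [L_a,L_a] = 0 (so the grading is in fact a ℤ₂-grading with L_b in degree 0 and L_a in degree 1). -/

import Mathlib

/-- If a finite-dimensional simple Lie algebra over an algebraically closed field
decomposes as `L = A ⊕ B` with `[A,A] ⊆ B`, `[A,B] ⊆ B`, `[B,B] ⊆ A`, then in fact
`[A,A] = 0` (so the grading is a `ℤ₂`-grading with `B` in degree 0 and `A` in degree 1). -/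
theorem stmt_2 (K L : Type*) [Field K] [IsAlgClosed K] [LieRing L] [LieAlgebra K L]
    [FiniteDimensional K L] [LieAlgebra.IsSimple K L]
    (A B : Submodule K L) (hcompl : IsCompl A B)
    (hAA : ∀ x ∈ A, ∀ y ∈ A, ⁅x, y⁆ ∈ B)
    (hAB : ∀ x ∈ A, ∀ y ∈ B, ⁅x, y⁆ ∈ B)
    (hBB : ∀ x ∈ B, ∀ y ∈ B, ⁅x, y⁆ ∈ A) :
    ∀ x ∈ A, ∀ y ∈ A, ⁅x, y⁆ = 0 := by
  classical
  have hBA : ∀ x ∈ B, ∀ y ∈ A, ⁅x, y⁆ ∈ B := fun x hx y hy => by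
    rw [← lie_skew]
    exact neg_mem (hAB y hy x hx)
  -- key fact : ⁅B, [A,A]⁆ = 0
  have hBC : ∀ b ∈ B, ∀ x ∈ A, ∀ y ∈ A, ⁅b, ⁅x, y⁆⁆ = 0 := by
    intro b hb x hx y hy
    have h1 : ⁅b, ⁅x, y⁆⁆ ∈ A := hBB b hb _ (hAA x hx y hy)
    have h2 : ⁅b, ⁅x, y⁆⁆ ∈ B := by
      rw [leibniz_lie]
      exact add_mem (hBA _ (hBA b hb x hx) y hy) (hAB x hx _ (hBA b hb y hy))
    have h3 : ⁅b, ⁅x, y⁆⁆ ∈ A ⊓ B := ⟨h1, h2⟩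
    simpa [hcompl.inf_eq_bot] using h3
  set A' : Submodule K L := Submodule.span K {z : L | ∃ x ∈ B, ∃ y ∈ B, ⁅x, y⁆ = z}
    with hA'def
  have hA'A : A' ≤ A := Submodule.span_le.2 (by
    rintro z ⟨x, hx, y, hy, rfl⟩; exact hBB x hx y hy)
  -- brackets of A and B with the span A'
  have hAA' : ∀ a ∈ A, ∀ z ∈ A', ⁅a, z⁆ ∈ B := by
    intro a ha z hz
    induction hz using Submodule.span_induction with
    | mem z hzmem =>
      obtain ⟨x, hx, y, hy, rfl⟩ := hzmem
      exact hAA a ha _ (hBB x hx y hy)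
    | zero => simp
    | add u v hu hv hu' hv' => rw [lie_add]; exact add_mem hu' hv'
    | smul t u hu hu' => rw [lie_smul]; exact Submodule.smul_mem _ _ hu'
  have hBA' : ∀ b ∈ B, ∀ z ∈ A', ⁅b, z⁆ ∈ B := by
    intro b hb z hz
    induction hz using Submodule.span_induction with
    | mem z hzmem =>
      obtain ⟨x, hx, y, hy, rfl⟩ := hzmem
      exact hBA b hb _ (hBB x hx y hy)
    | zero => simp
    | add u v hu hv hu' hv' => rw [lie_add]; exact add_mem hu' hv'
    | smul t u hu hu' => rw [lie_smul]; exact Submodule.smul_mem _ _ hu'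
  -- S := B ⊔ A' is an ideal
  have hlie : ∀ (w m : L), m ∈ B ⊔ A' → ⁅w, m⁆ ∈ B ⊔ A' := by
    intro w m hm
    obtain ⟨mb, hmb, ma, hma, rfl⟩ := Submodule.mem_sup.1 hm
    have hw : w ∈ A ⊔ B := by rw [hcompl.sup_eq_top]; trivial
    obtain ⟨wa, hwa, wb, hwb, rfl⟩ := Submodule.mem_sup.1 hw
    rw [add_lie, lie_add, lie_add]
    refine add_mem (add_mem ?_ ?_) (add_mem ?_ ?_)
    · exact Submodule.mem_sup_left (hAB wa hwa mb hmb)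
    · exact Submodule.mem_sup_left (hAA' wa hwa ma hma)
    · exact Submodule.mem_sup_right (Submodule.subset_span ⟨wb, hwb, mb, hmb, rfl⟩)
    · exact Submodule.mem_sup_left (hBA' wb hwb ma hma)
  let S : LieIdeal K L :=
    { toSubmodule := B ⊔ A'
      lie_mem := fun {w m} hm => hlie w m hm }
  have hScoe : (S : Submodule K L) = B ⊔ A' := rfl
  rcases LieAlgebra.IsSimple.eq_bot_or_eq_top S with hS | hS
  · -- S = ⊥, so B = ⊥ and [A,A] ⊆ B = ⊥
    have hBbot : B = ⊥ := by
      have : (S : Submodule K L) = ⊥ := by rw [hS]; rfl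
      rw [hScoe] at this
      exact le_bot_iff.1 (le_trans le_sup_left this.le)
    intro x hx y hy
    have := hAA x hx y hy
    rw [hBbot] at this
    simpa using this
  · -- S = ⊤, so A = A'
    have htop : B ⊔ A' = ⊤ := by
      have : (S : Submodule K L) = ⊤ := by rw [hS]; rfl
      rwa [hScoe] at this
    have hAeq : A = A' := by
      have h1 : (A' ⊔ B) ⊓ A = A' ⊔ (B ⊓ A) := sup_inf_assoc_of_le B hA'A
      rw [inf_comm B A, hcompl.inf_eq_bot, sup_bot_eq] at h1
      rw [sup_comm] at htop
      rw [htop, top_inf_eq] at h1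
      exact h1
    intro x hx y hy
    -- ⁅x, y⁆ is central
    have hcent : ∀ w : L, ⁅w, ⁅x, y⁆⁆ = 0 := by
      intro w
      have hw : w ∈ A ⊔ B := by rw [hcompl.sup_eq_top]; trivial
      obtain ⟨wa, hwa, wb, hwb, rfl⟩ := Submodule.mem_sup.1 hw
      rw [add_lie, hBC wb hwb x hx y hy, add_zero]
      rw [hAeq] at hwa
      clear hw
      induction hwa using Submodule.span_induction with
      | mem z hzmem =>
        obtain ⟨p, hp, q, hq, rfl⟩ := hzmem
        rw [lie_lie, hBC p hp x hx y hy, hBC q hq x hx y hy]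
        simp
      | zero => simp
      | add u v hu hv hu' hv' => rw [add_lie, hu', hv', add_zero]
      | smul t u hu hu' => rw [smul_lie, hu', smul_zero]
    have hc : ⁅x, y⁆ ∈ LieAlgebra.center K L := fun w => hcent w
    rw [LieAlgebra.center_eq_bot] at hc
    simpa using hc
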